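/- arXiv:2403.01159 — 4 statements merged into one kernel-verified Lean document; each statement's English description precedes it below -/
import Mathlib

section
/- The distinguished boundary bΓ₂ = {(z₁+z₂, z₁z₂) : z₁, z₂ ∈ 𝕋} of the symmetrized bidisc equals the set {(s,p) ∈ ℂ² : |s| ≤ 2, s = s̄·p, |p| = 1}. -/
open Complex

/-- The distinguished boundary of the symmetrized bidisc:
`{(z₁+z₂, z₁z₂) : |z₁| = |z₂| = 1} = {(s,p) : |s| ≤ 2, s = s̄ p, |p| = 1}`. -/
theorem bGamma2_characterization :
    {x : ℂ × ℂ | ∃ z₁ z₂ : ℂ, ‖z₁‖ = 1 ∧ ‖z₂‖ = 1 ∧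
        x = (z₁ + z₂, z₁ * z₂)} =
      {x : ℂ × ℂ | ‖x.1‖ ≤ 2 ∧ x.1 = starRingEnd ℂ x.1 * x.2 ∧
        ‖x.2‖ = 1} := by
  ext ⟨s, p⟩
  simp only [Set.mem_setOf_eq, Prod.mk.injEq]
  constructor
  · rintro ⟨z₁, z₂, h1, h2, hs, hp⟩
    subst hs hp
    have c1 : (starRingEnd ℂ) z₁ * z₁ = 1 := by
      rw [mul_comm, Complex.mul_conj, Complex.normSq_eq_norm_sq, h1]; norm_num
    have c2 : (starRingEnd ℂ) z₂ * z₂ = 1 := by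
      rw [mul_comm, Complex.mul_conj, Complex.normSq_eq_norm_sq, h2]; norm_num
    refine ⟨?_, ?_, ?_⟩
    · calc ‖z₁ + z₂‖ ≤ ‖z₁‖ + ‖z₂‖ :=
            norm_add_le _ _
        _ = 2 := by rw [h1, h2]; norm_num
    · simp only [map_add]
      calc z₁ + z₂ = ((starRingEnd ℂ) z₁ * z₁) * z₂ + ((starRingEnd ℂ) z₂ * z₂) * z₁ := by
            rw [c1, c2]; ring
        _ = ((starRingEnd ℂ) z₁ + (starRingEnd ℂ) z₂) * (z₁ * z₂) := by ring
    · rw [norm_mul, h1, h2]; norm_num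
  · rintro ⟨habs, hsp, hp⟩
    -- square root of p
    set w : ℂ := Complex.exp ((p.arg / 2 : ℝ) * I) with hw
    have hw2 : w ^ 2 = p := by
      rw [hw, sq, ← Complex.exp_add]
      have : ((p.arg / 2 : ℝ) : ℂ) * I + ((p.arg / 2 : ℝ) : ℂ) * I = (p.arg : ℝ) * I := by
        push_cast; ring
      rw [this]
      have := Complex.norm_mul_exp_arg_mul_I p
      rwa [hp, Complex.ofReal_one, one_mul] at this
    have hwabs : ‖w‖ = 1 := Complex.norm_exp_ofReal_mul_I _
    have hwconj : w * (starRingEnd ℂ) w = 1 := by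
      rw [Complex.mul_conj, Complex.normSq_eq_norm_sq, hwabs]; norm_num
    set t : ℂ := (starRingEnd ℂ) s * w with ht
    have htreal : (starRingEnd ℂ) t = t := by
      rw [ht, map_mul, Complex.conj_conj]
      nth_rw 1 [hsp]
      rw [← hw2]
      calc (starRingEnd ℂ) s * w ^ 2 * (starRingEnd ℂ) w
          = (starRingEnd ℂ) s * w * (w * (starRingEnd ℂ) w) := by ring
        _ = (starRingEnd ℂ) s * w := by rw [hwconj, mul_one]
    have hre : ((t.re : ℝ) : ℂ) = t := Complex.conj_eq_iff_re.mp htreal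
    set r : ℝ := t.re with hrdef
    have htabs : ‖t‖ = ‖s‖ := by
      rw [ht, norm_mul, Complex.norm_conj, hwabs, mul_one]
    have hrabs : |r| ≤ 2 := by
      have : ‖((r : ℂ))‖ ≤ 2 := by rw [hre, htabs]; exact habs
      rwa [Complex.norm_real, Real.norm_eq_abs] at this
    have hr2 : (r / 2) ^ 2 ≤ 1 := by
      nlinarith [abs_nonneg r, _root_.sq_abs r]
    set u : ℝ := Real.sqrt (1 - (r / 2) ^ 2) with hudef
    have hu2 : u ^ 2 = 1 - (r / 2) ^ 2 := Real.sq_sqrt (by linarith)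
    refine ⟨w * ((r / 2 : ℝ) + (u : ℝ) * I), w * ((r / 2 : ℝ) - (u : ℝ) * I), ?_, ?_, ?_, ?_⟩
    · rw [norm_mul, hwabs, one_mul, Complex.norm_add_mul_I]
      rw [show (r/2)^2 + u^2 = 1 by rw [hu2]; ring]
      exact Real.sqrt_one
    · rw [norm_mul, hwabs, one_mul]
      rw [show ((r / 2 : ℝ) : ℂ) - (u : ℝ) * I = ((r/2 : ℝ) : ℂ) + ((-u : ℝ) : ℂ) * I by
        push_cast; ring]
      rw [Complex.norm_add_mul_I]
      rw [show (r/2)^2 + (-u)^2 = 1 by rw [show (-u)^2 = u^2 by ring, hu2]; ring]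
      exact Real.sqrt_one
    · have : w * ((r / 2 : ℝ) + (u : ℝ) * I) + w * ((r / 2 : ℝ) - (u : ℝ) * I)
          = w * (r : ℂ) := by push_cast; ring
      rw [this, hre, ht]
      conv_lhs => rw [hsp, ← hw2]
      ring
    · have key : (((r / 2 : ℝ) : ℂ) + (u : ℝ) * I) * (((r / 2 : ℝ) : ℂ) - (u : ℝ) * I)
          = (((r/2)^2 + u^2 : ℝ) : ℂ) := by
        push_cast
        have : (I : ℂ)^2 = -1 := Complex.I_sq
        ring_nf
        rw [Complex.I_sq]
        ring
      symm
      calc w * ((r / 2 : ℝ) + (u : ℝ) * I) * (w * ((r / 2 : ℝ) - (u : ℝ) * I))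
          = w ^ 2 * ((((r / 2 : ℝ) : ℂ) + (u : ℝ) * I) * (((r / 2 : ℝ) : ℂ) - (u : ℝ) * I)) := by
            ring
        _ = p := by
            rw [key, show (r/2)^2 + u^2 = 1 by rw [hu2]; ring, hw2]
            norm_num
end

section
/- The distinguished boundary of the symmetrized bidisc is the union of the orbits of (0,1) and (2,1) under the automorphism group: bΓ₂ = { τ_v(0,1) : v ∈ Aut(𝔻) } ∪ { τ_v(2,1) : v ∈ Aut(𝔻) }. -/
open Complex

/-- Möbius automorphism of the unit disc. -/
noncomputable def discAut (ω α z : ℂ) : ℂ := ω * (z - α) / (starRingEnd ℂ α * z - 1)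

lemma conj_mul_self_eq_one {z : ℂ} (hz : ‖z‖ = 1) : starRingEnd ℂ z * z = 1 := by
  have := Complex.normSq_eq_conj_mul_self (z := z)
  rw [Complex.normSq_eq_norm_sq, hz] at this
  simpa using this.symm

lemma abs_denom (α z : ℂ) (hz : ‖z‖ = 1) :
    ‖starRingEnd ℂ α * z - 1‖ = ‖z - α‖ := by
  calc ‖starRingEnd ℂ α * z - 1‖
      = ‖starRingEnd ℂ (starRingEnd ℂ α * z - 1)‖ := (Complex.norm_conj _).symm
    _ = ‖α * starRingEnd ℂ z - 1‖ := by simp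
    _ = ‖starRingEnd ℂ z * (α - z)‖ := by
        rw [mul_sub, mul_comm (starRingEnd ℂ z) α, conj_mul_self_eq_one hz]
    _ = ‖α - z‖ := by rw [norm_mul, Complex.norm_conj, hz, one_mul]
    _ = ‖z - α‖ := by rw [← neg_sub, norm_neg]

lemma abs_discAut (ω α z : ℂ) (hω : ‖ω‖ = 1) (hα : ‖α‖ < 1)
    (hz : ‖z‖ = 1) : ‖discAut ω α z‖ = 1 := by
  have hne : ‖z - α‖ ≠ 0 := by
    intro h
    rw [norm_eq_zero, sub_eq_zero] at h
    rw [h] at hz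
    exact absurd hz (ne_of_lt hα)
  unfold discAut
  rw [norm_div, norm_mul, hω, one_mul, abs_denom α z hz, div_self hne]

lemma exists_aut (z₁ z₂ : ℂ) (h1 : ‖z₁‖ = 1) (h2 : ‖z₂‖ = 1)
    (hne : z₁ ≠ z₂) (him : 0 ≤ (z₂ * starRingEnd ℂ z₁).im) :
    ∃ ω α : ℂ, ‖ω‖ = 1 ∧ ‖α‖ < 1 ∧
      discAut ω α Complex.I = z₁ ∧ discAut ω α (-Complex.I) = z₂ := by
  set q : ℂ := z₂ * starRingEnd ℂ z₁ with hq
  have hqabs : ‖q‖ = 1 := by rw [hq, norm_mul, Complex.norm_conj, h1, h2, one_mul]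
  have hqne : q ≠ 1 := by
    intro h
    apply hne
    have := congrArg (· * z₁) h
    simp only [one_mul] at this
    rw [hq, mul_assoc, conj_mul_self_eq_one h1, mul_one] at this
    exact this.symm
  set θ : ℝ := Complex.arg q with hθ
  have hθpos : 0 < θ := by
    rcases lt_or_eq_of_le (Complex.arg_nonneg_iff.mpr him) with h | h
    · exact h
    · exfalso
      apply hqne
      have h' : θ = 0 := by rw [hθ, ← h]
      have := Complex.norm_mul_exp_arg_mul_I q
      rw [← hθ, h', hqabs] at this
      simpa using this.symm
  have hθle : θ ≤ Real.pi := Complex.arg_le_pi q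
  set a : ℝ := Real.cos (θ/2) with ha
  set b : ℝ := Real.sin (θ/2) with hb
  have hbpos : 0 < b := Real.sin_pos_of_pos_of_lt_pi (by linarith) (by linarith [Real.pi_pos])
  have hanneg : 0 ≤ a := Real.cos_nonneg_of_mem_Icc ⟨by linarith [Real.pi_pos], by linarith⟩
  have hab : a^2 + b^2 = 1 := by rw [ha, hb]; rw [add_comm]; exact Real.sin_sq_add_cos_sq _
  have halt : a < 1 := by nlinarith
  have hble : b ≤ 1 := by nlinarith
  -- w = a + b I, w^2 = q
  have hw2 : ((a:ℂ) + b * Complex.I)^2 = q := by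
    have e1 : Complex.exp ((θ/2 : ℝ) * Complex.I) = (a:ℂ) + b * Complex.I := by
      rw [Complex.exp_mul_I, ha, hb]
      push_cast [Complex.ofReal_cos, Complex.ofReal_sin]
      ring
    have e2 : Complex.exp ((θ:ℝ) * Complex.I) = q := by
      have := Complex.norm_mul_exp_arg_mul_I q
      rw [← hθ, hqabs] at this
      simpa using this
    rw [← e1, ← Complex.exp_nat_mul]
    rw [← e2]
    congr 1
    push_cast
    ring
  set y : ℝ := Real.sqrt (1 - b^2/4) with hy
  have hy2 : y^2 = 1 - b^2/4 := Real.sq_sqrt (by nlinarith)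
  have hynneg : 0 ≤ y := Real.sqrt_nonneg _
  set α : ℂ := (↑(a*b/2) : ℂ) + ↑(a*y) * Complex.I with hα
  have hconjα : starRingEnd ℂ α = (↑(a*b/2) : ℂ) - ↑(a*y) * Complex.I := by
    rw [hα, map_add, map_mul, Complex.conj_ofReal, Complex.conj_ofReal, Complex.conj_I]; ring
  have habs_α : ‖α‖ = a := by
    have h1' : ‖α‖ ^ 2 = a^2 := by
      rw [← Complex.normSq_eq_norm_sq, hα, Complex.normSq_apply]
      simp [Complex.add_re, Complex.add_im]
      nlinarith [hy2]
    nlinarith [norm_nonneg α]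
  have hαlt : ‖α‖ < 1 := by rw [habs_α]; exact halt
  -- nonzero denominators
  have hIα : Complex.I - α ≠ 0 := by
    intro h
    rw [sub_eq_zero] at h
    rw [← h, Complex.norm_I] at hαlt
    exact lt_irrefl 1 hαlt
  have hnIα : -Complex.I - α ≠ 0 := by
    intro h
    rw [sub_eq_zero] at h
    rw [← h] at hαlt
    simp at hαlt
  have hd1 : starRingEnd ℂ α * Complex.I - 1 ≠ 0 := by
    intro h
    rw [sub_eq_zero] at h
    have : ‖starRingEnd ℂ α * Complex.I‖ = 1 := by rw [h]; simp
    rw [norm_mul, Complex.norm_conj, Complex.norm_I, mul_one, habs_α] at this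
    exact absurd this (ne_of_lt halt)
  have hd2 : starRingEnd ℂ α * (-Complex.I) - 1 ≠ 0 := by
    intro h
    rw [sub_eq_zero] at h
    have : ‖starRingEnd ℂ α * (-Complex.I)‖ = 1 := by rw [h]; simp
    rw [norm_mul, Complex.norm_conj] at this
    simp [habs_α] at this
    exact absurd this (ne_of_lt halt)
  -- cast facts
  have habC : (a:ℂ)^2 + (b:ℂ)^2 = 1 := by exact_mod_cast congrArg (Complex.ofReal) hab
  have hy2C : (y:ℂ)^2 = 1 - (b:ℂ)^2/4 := by exact_mod_cast congrArg (Complex.ofReal) hy2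
  have hz1c : z₁ * starRingEnd ℂ z₁ = 1 := by rw [mul_comm]; exact conj_mul_self_eq_one h1
  have hww : ((a:ℂ) + b*Complex.I) * ((a:ℂ) - b*Complex.I) = 1 := by
    linear_combination habC - (b:ℂ)^2 * Complex.I_sq
  have key : z₁ * ((a:ℂ) + b*Complex.I) = z₂ * ((a:ℂ) - b*Complex.I) := by
    calc z₁ * ((a:ℂ) + b*Complex.I)
        = z₁ * ((a:ℂ) + b*Complex.I) * (((a:ℂ) + b*Complex.I) * ((a:ℂ) - b*Complex.I)) := by
          rw [hww, mul_one]
      _ = z₁ * ((a:ℂ) + b*Complex.I)^2 * ((a:ℂ) - b*Complex.I) := by ring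
      _ = z₁ * (z₂ * starRingEnd ℂ z₁) * ((a:ℂ) - b*Complex.I) := by rw [hw2, hq]
      _ = (z₁ * starRingEnd ℂ z₁) * (z₂ * ((a:ℂ) - b*Complex.I)) := by ring
      _ = z₂ * ((a:ℂ) - b*Complex.I) := by rw [hz1c, one_mul]
  have p1 : (starRingEnd ℂ α * Complex.I - 1) * (-Complex.I - α)
      = (b:ℂ) * ((a:ℂ) + b*Complex.I) := by
    rw [hconjα, hα]
    push_cast
    linear_combination (-((a:ℂ)*b/2) + ((a:ℂ)*y + ((a:ℂ)*y)^2)*Complex.I) * Complex.I_sq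
      + (-Complex.I) * habC + (-(a:ℂ)^2*Complex.I) * hy2C
  have p2 : (Complex.I - α) * (starRingEnd ℂ α * (-Complex.I) - 1)
      = (b:ℂ) * ((a:ℂ) - b*Complex.I) := by
    rw [hconjα, hα]
    push_cast
    linear_combination (-((a:ℂ)*b/2) + ((a:ℂ)*y - ((a:ℂ)*y)^2)*Complex.I) * Complex.I_sq
      + Complex.I * habC + ((a:ℂ)^2*Complex.I) * hy2C
  have main : z₁ * ((starRingEnd ℂ α * Complex.I - 1) * (-Complex.I - α))
      = z₂ * ((Complex.I - α) * (starRingEnd ℂ α * (-Complex.I) - 1)) := by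
    rw [p1, p2]
    linear_combination (b:ℂ) * key
  refine ⟨z₁ * (starRingEnd ℂ α * Complex.I - 1) / (Complex.I - α), α, ?_, hαlt, ?_, ?_⟩
  · rw [norm_div, norm_mul, h1, one_mul, abs_denom α Complex.I Complex.norm_I]
    exact div_self (by rw [ne_eq, norm_eq_zero]; exact hIα)
  · unfold discAut
    rw [div_eq_iff hd1, div_mul_eq_mul_div, div_eq_iff hIα]
  · unfold discAut
    rw [div_eq_iff hd2, div_mul_eq_mul_div, div_eq_iff hIα]
    linear_combination main

/-- The distinguished boundary of the symmetrized bidisc is the union of the orbits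
of `(0,1)` and `(2,1)` under the automorphism group, where
`τ_v(0,1) = (v(i)+v(-i), v(i)v(-i))` and `τ_v(2,1) = (2v(1), v(1)²)`. -/
theorem bGamma2_eq_union_of_orbits :
    {x : ℂ × ℂ | ∃ z₁ z₂ : ℂ, ‖z₁‖ = 1 ∧ ‖z₂‖ = 1 ∧
        x = (z₁ + z₂, z₁ * z₂)} =
      {x : ℂ × ℂ | ∃ ω α : ℂ, ‖ω‖ = 1 ∧ ‖α‖ < 1 ∧
          x = (discAut ω α Complex.I + discAut ω α (-Complex.I),
               discAut ω α Complex.I * discAut ω α (-Complex.I))} ∪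
      {x : ℂ × ℂ | ∃ ω α : ℂ, ‖ω‖ = 1 ∧ ‖α‖ < 1 ∧
          x = (2 * discAut ω α 1, (discAut ω α 1) ^ 2)} := by
  ext x
  simp only [Set.mem_setOf_eq, Set.mem_union]
  constructor
  · rintro ⟨z₁, z₂, h1, h2, rfl⟩
    by_cases heq : z₁ = z₂
    · right
      refine ⟨-z₁, 0, by simpa using h1, by simp, ?_⟩
      have : discAut (-z₁) 0 1 = z₁ := by unfold discAut; simp
      rw [this, ← heq]
      exact Prod.ext (by simp; ring) (by simp [sq])
    · by_cases him : 0 ≤ (z₂ * starRingEnd ℂ z₁).im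
      · obtain ⟨ω, α, hω, hα, e1, e2⟩ := exists_aut z₁ z₂ h1 h2 heq him
        exact Or.inl ⟨ω, α, hω, hα, by rw [e1, e2]⟩
      · have him' : 0 ≤ (z₁ * starRingEnd ℂ z₂).im := by
          push_neg at him
          have hc : z₁ * starRingEnd ℂ z₂ = starRingEnd ℂ (z₂ * starRingEnd ℂ z₁) := by
            rw [map_mul, Complex.conj_conj, mul_comm]
          rw [hc, Complex.conj_im]
          linarith
        obtain ⟨ω, α, hω, hα, e1, e2⟩ := exists_aut z₂ z₁ h2 h1 (Ne.symm heq) him'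
        refine Or.inl ⟨ω, α, hω, hα, ?_⟩
        rw [e1, e2]
        exact Prod.ext (by simp; ring) (by simp; ring)
  · rintro (⟨ω, α, hω, hα, rfl⟩ | ⟨ω, α, hω, hα, rfl⟩)
    · exact ⟨discAut ω α Complex.I, discAut ω α (-Complex.I),
        abs_discAut ω α _ hω hα (by simp), abs_discAut ω α _ hω hα (by simp), rfl⟩
    · exact ⟨discAut ω α 1, discAut ω α 1,
        abs_discAut ω α _ hω hα (by simp), abs_discAut ω α _ hω hα (by simp),
        Prod.ext (by simp; ring) (by simp [sq])⟩
end

section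
/- Given points z₁, …, zₙ on the unit circle and distinct points μ₁, …, μₙ on the unit circle, there exists a finite Blaschke product B with B(μⱼ) = zⱼ for all 1 ≤ j ≤ n. -/
open Complex Finset Polynomial

/-- `B : ℂ → ℂ` is a finite Blaschke product:
`B(z) = ω ∏ⱼ (z - aⱼ)/(1 - āⱼ z)` with `|ω| = 1` and `|aⱼ| < 1`. -/
def IsFiniteBlaschke (B : ℂ → ℂ) : Prop :=
  ∃ (m : ℕ) (ω : ℂ) (a : Fin m → ℂ), ‖ω‖ = 1 ∧ (∀ k, ‖a k‖ < 1) ∧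
    ∀ z : ℂ, B z = ω * ∏ k, (z - a k) / (1 - starRingEnd ℂ (a k) * z)

lemma denom_ne (a z : ℂ) (ha : ‖a‖ < 1) (hz : ‖z‖ = 1) :
    1 - starRingEnd ℂ a * z ≠ 0 := by
  intro h
  have h1 : starRingEnd ℂ a * z = 1 := by linear_combination -h
  have : ‖starRingEnd ℂ a * z‖ = 1 := by rw [h1]; simp
  rw [norm_mul, Complex.norm_conj, hz, mul_one] at this
  exact absurd this (ne_of_lt ha)

lemma abs_factor (a z : ℂ) (ha : ‖a‖ < 1) (hz : ‖z‖ = 1) :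
    ‖(z - a) / (1 - starRingEnd ℂ a * z)‖ = 1 := by
  have hzne : z ≠ 0 := by intro h; simp [h] at hz
  have key : z - a = z * (1 - starRingEnd ℂ z * a) := by
    have : starRingEnd ℂ z * z = 1 := by
      rw [← Complex.normSq_eq_conj_mul_self]
      rw [← Complex.sq_norm, hz]; norm_num
    have h2 : z * (1 - starRingEnd ℂ z * a) = z - (z * starRingEnd ℂ z) * a := by ring
    rw [h2, mul_comm z (starRingEnd ℂ z), this, one_mul]
  rw [key, norm_div, norm_mul, hz, one_mul]
  rw [div_eq_one_iff_eq (by exact norm_ne_zero_iff.mpr (denom_ne a z ha hz))]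
  calc ‖1 - starRingEnd ℂ z * a‖
      = ‖starRingEnd ℂ (1 - starRingEnd ℂ z * a)‖ := (Complex.norm_conj _).symm
    _ = ‖1 - starRingEnd ℂ a * z‖ := by rw [map_sub, map_mul]; simp [mul_comm]

lemma blaschke_abs {B : ℂ → ℂ} (hB : IsFiniteBlaschke B) {z : ℂ} (hz : ‖z‖ = 1) :
    ‖B z‖ = 1 := by
  obtain ⟨m, ω, a, hω, ha, hform⟩ := hB
  rw [hform z, norm_mul, hω, one_mul, norm_prod]
  rw [Finset.prod_eq_one]
  intro k _
  exact abs_factor (a k) z (ha k) hz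

lemma blaschke_mul {B₁ B₂ : ℂ → ℂ} (h₁ : IsFiniteBlaschke B₁) (h₂ : IsFiniteBlaschke B₂) :
    IsFiniteBlaschke (fun z => B₁ z * B₂ z) := by
  obtain ⟨m₁, ω₁, a₁, hω₁, ha₁, hf₁⟩ := h₁
  obtain ⟨m₂, ω₂, a₂, hω₂, ha₂, hf₂⟩ := h₂
  refine ⟨m₁ + m₂, ω₁ * ω₂, Fin.append a₁ a₂, by rw [norm_mul, hω₁, hω₂, one_mul], ?_, ?_⟩
  · intro k
    refine Fin.addCases (fun i => ?_) (fun i => ?_) k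
    · rw [Fin.append_left]; exact ha₁ i
    · rw [Fin.append_right]; exact ha₂ i
  · intro z
    show B₁ z * B₂ z = _
    rw [hf₁ z, hf₂ z, Fin.prod_univ_add]
    simp only [Fin.append_left, Fin.append_right]
    ring

lemma abs_one_ne_zero {w : ℂ} (hw : ‖w‖ = 1) : w ≠ 0 := by
  intro h; simp [h] at hw

lemma conj_eq_inv {w : ℂ} (hw : ‖w‖ = 1) : starRingEnd ℂ w = w⁻¹ := by
  have h := Complex.mul_conj w
  rw [Complex.normSq_eq_norm_sq, hw] at h
  field_simp [abs_one_ne_zero hw] at h ⊢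
  linear_combination h + Complex.ofReal_one

lemma re_herglotz_pos {w q : ℂ} (hw : ‖w‖ = 1) (hq : ‖q‖ < 1) :
    0 < ((w + q) / (w - q)).re := by
  have hd : w - q ≠ 0 := by
    rw [sub_ne_zero]; intro h; rw [← h, hw] at hq; exact lt_irrefl 1 hq
  have h1 : ((w + q) / (w - q)) * ((Complex.normSq (w - q) : ℝ) : ℂ) = (w + q) * starRingEnd ℂ (w - q) := by
    rw [← Complex.mul_conj]
    field_simp
  have h2 : ((w + q) * starRingEnd ℂ (w - q)).re = Complex.normSq w - Complex.normSq q := by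
    have e : (w + q) * starRingEnd ℂ (w - q) =
        (Complex.normSq w : ℂ) - (Complex.normSq q : ℂ) + (q * starRingEnd ℂ w - starRingEnd ℂ (q * starRingEnd ℂ w)) := by
      rw [← Complex.mul_conj, ← Complex.mul_conj]
      simp only [map_sub, map_mul, Complex.conj_conj]
      ring
    rw [e]
    rw [Complex.sub_conj]
    simp
  have h3 : ((w + q) / (w - q)).re * Complex.normSq (w - q) = Complex.normSq w - Complex.normSq q := by
    have h4 := congrArg Complex.re h1
    rw [h2] at h4
    rw [← h4]
    simp [Complex.mul_re]
  have hns : 0 < Complex.normSq (w - q) := Complex.normSq_pos.mpr hd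
  have hlt : Complex.normSq q < Complex.normSq w := by
    rw [Complex.normSq_eq_norm_sq, Complex.normSq_eq_norm_sq, hw]
    nlinarith [norm_nonneg q]
  nlinarith

lemma conj_herglotz {w q : ℂ} (hw : ‖w‖ = 1) (hq : ‖q‖ = 1) (hne : w ≠ q) :
    starRingEnd ℂ ((w + q) / (w - q)) = -((w + q) / (w - q)) := by
  have hw0 := abs_one_ne_zero hw
  have hq0 := abs_one_ne_zero hq
  have hd : w - q ≠ 0 := sub_ne_zero.mpr hne
  have hd' : w⁻¹ - q⁻¹ ≠ 0 := by
    rw [sub_ne_zero]; exact fun h => hne (inv_injective h)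
  have hd'' : q - w ≠ 0 := sub_ne_zero.mpr (Ne.symm hne)
  rw [map_div₀, map_add, map_sub, conj_eq_inv hw, conj_eq_inv hq]
  field_simp
  ring

lemma re_zero_of_conj_neg {x : ℂ} (h : starRingEnd ℂ x = -x) : x.re = 0 := by
  have := congrArg Complex.re h
  simp [Complex.conj_re] at this
  linarith


section
variable (M : ℕ) (w : Fin M → ℂ) (c : Fin M → ℝ)

noncomputable def Df (z : ℂ) : ℂ := ∏ k, (z - w k)
noncomputable def Nf (z : ℂ) : ℂ :=
  -∑ k, (c k : ℂ) * ((z + w k) * ∏ l ∈ Finset.univ.erase k, (z - w l))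
noncomputable def Ff (z : ℂ) : ℂ := ∑ k, (c k : ℂ) * ((w k + z) / (w k - z))
noncomputable def Qp : Polynomial ℂ :=
  (-∑ k, Polynomial.C ((c k : ℝ) : ℂ) *
    ((X + Polynomial.C (w k)) * ∏ l ∈ Finset.univ.erase k, (X - Polynomial.C (w l))))
  + ∏ k, (X - Polynomial.C (w k))
end

section facts
variable {M : ℕ} {w : Fin M → ℂ} {c : Fin M → ℝ}

lemma Qp_eval (z : ℂ) : (Qp M w c).eval z = Nf M w c z + Df M w z := by
  simp only [Qp, Nf, Df, eval_add, eval_neg, eval_finset_sum, eval_prod, eval_mul,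
    eval_sub, eval_X, eval_C]

lemma D_monic : (∏ k, (X - Polynomial.C (w k))).Monic :=
  monic_prod_of_monic _ _ fun l _ => monic_X_sub_C _

lemma D_natDegree : (∏ k, (X - Polynomial.C (w k))).natDegree = M := by
  rw [natDegree_prod _ _ fun l _ => X_sub_C_ne_zero _]
  simp [natDegree_X_sub_C]

lemma mon_monic (k : Fin M) :
    ((X + Polynomial.C (w k)) * ∏ l ∈ Finset.univ.erase k, (X - Polynomial.C (w l))).Monic :=
  (monic_X_add_C _).mul (monic_prod_of_monic _ _ fun l _ => monic_X_sub_C _)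

lemma mon_natDegree (k : Fin M) :
    ((X + Polynomial.C (w k)) * ∏ l ∈ Finset.univ.erase k, (X - Polynomial.C (w l))).natDegree
      = M := by
  rw [natDegree_mul (X_add_C_ne_zero _)
    (monic_prod_of_monic _ _ fun l _ => monic_X_sub_C _).ne_zero]
  rw [natDegree_prod _ _ fun l _ => X_sub_C_ne_zero _]
  simp only [natDegree_X_add_C, natDegree_X_sub_C, Finset.sum_const, smul_eq_mul, mul_one]
  rw [Finset.card_erase_of_mem (Finset.mem_univ _), Finset.card_univ, Fintype.card_fin]
  have : 0 < M := k.pos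
  omega

lemma Qp_coeff_M : (Qp M w c).coeff M = 1 - (∑ k, (c k : ℂ)) := by
  rw [Qp, coeff_add, coeff_neg, finset_sum_coeff]
  have hD : (∏ k, (X - Polynomial.C (w k))).coeff M = 1 := by
    have := (D_monic (M := M) (w := w)).coeff_natDegree
    rwa [D_natDegree] at this
  have hk : ∀ k : Fin M, (Polynomial.C ((c k : ℝ) : ℂ) *
      ((X + Polynomial.C (w k)) * ∏ l ∈ Finset.univ.erase k, (X - Polynomial.C (w l)))).coeff M
      = (c k : ℂ) := by
    intro k
    rw [coeff_C_mul]
    have := (mon_monic (M := M) (w := w) k).coeff_natDegree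
    rw [mon_natDegree k] at this
    rw [this, mul_one]
  rw [Finset.sum_congr rfl fun k _ => hk k, hD]
  ring

lemma sum_c_ne (hS : (∑ k, c k) ≠ 1) : (1 : ℂ) - (∑ k, (c k : ℂ)) ≠ 0 := by
  intro h
  apply hS
  have : ((∑ k, c k : ℝ) : ℂ) = 1 := by push_cast; linear_combination -h
  exact_mod_cast this

lemma Qp_natDegree (hS : (∑ k, c k) ≠ 1) : (Qp M w c).natDegree = M := by
  apply le_antisymm
  · apply natDegree_add_le_of_degree_le
    · rw [natDegree_neg]
      apply natDegree_sum_le_of_forall_le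
      intro k _
      exact le_trans (natDegree_C_mul_le _ _) (le_of_eq (mon_natDegree k))
    · exact le_of_eq D_natDegree
  · apply le_natDegree_of_ne_zero
    rw [Qp_coeff_M]
    exact sum_c_ne hS

lemma Qp_ne_zero (hS : (∑ k, c k) ≠ 1) : Qp M w c ≠ 0 := by
  intro h
  have := Qp_coeff_M (M := M) (w := w) (c := c)
  rw [h] at this
  simp at this
  have : (∑ k, c k) = 1 := by
    have h2 := congrArg Complex.re this.symm
    push_cast at h2
    simp at h2
    linarith
  exact hS this

end facts

section facts2
variable {M : ℕ} {w : Fin M → ℂ} {c : Fin M → ℝ}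
variable (hw : ∀ k, ‖w k‖ = 1) (hinj : Function.Injective w)
  (hc : ∀ k, 0 < c k)

lemma Df_ne_zero {z : ℂ} (hz : z ∉ Set.range w) : Df M w z ≠ 0 := by
  rw [Df, Finset.prod_ne_zero_iff]
  intro k _
  rw [sub_ne_zero]
  exact fun h => hz ⟨k, h.symm⟩

include hw hinj hc in
lemma Nf_pole (k : Fin M) : Nf M w c (w k) ≠ 0 := by
  rw [Nf]
  rw [Finset.sum_eq_single k]
  · rw [neg_ne_zero]
    apply mul_ne_zero
    · simpa using (hc k).ne'
    apply mul_ne_zero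
    · have : w k + w k = 2 * w k := by ring
      rw [this]
      exact mul_ne_zero two_ne_zero (abs_one_ne_zero (hw k))
    · rw [Finset.prod_ne_zero_iff]
      intro l hl
      rw [sub_ne_zero]
      exact fun h => (Finset.mem_erase.mp hl).1 (hinj h.symm)
  · intro j _ hj
    have hk : k ∈ Finset.univ.erase j := Finset.mem_erase.mpr ⟨fun h => hj h.symm, Finset.mem_univ _⟩
    rw [Finset.prod_eq_zero hk (by ring)]
    ring
  · intro h; exact absurd (Finset.mem_univ k) h

lemma Nf_eq {z : ℂ} (hz : z ∉ Set.range w) : Nf M w c z = Df M w z * Ff M w c z := by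
  rw [Df, Ff, Finset.mul_sum, Nf, neg_eq_iff_eq_neg, ← Finset.sum_neg_distrib]
  apply Finset.sum_congr rfl
  intro k _
  have hne : w k - z ≠ 0 := by
    rw [sub_ne_zero]; exact fun h => hz ⟨k, h⟩
  rw [← Finset.mul_prod_erase _ _ (Finset.mem_univ k)]
  field_simp
  ring

include hw hc in
lemma ReF_nonneg {z : ℂ} (hz : ‖z‖ ≤ 1) (hz' : z ∉ Set.range w) :
    0 ≤ (Ff M w c z).re := by
  rw [Ff, Complex.re_sum]
  apply Finset.sum_nonneg
  intro k _
  rw [Complex.re_ofReal_mul]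
  apply mul_nonneg (hc k).le
  rcases lt_or_eq_of_le hz with h | h
  · exact (re_herglotz_pos (hw k) h).le
  · have hcj := conj_herglotz (hw k) h (fun hh => hz' ⟨k, hh⟩)
    rw [re_zero_of_conj_neg hcj]

include hw hc in
lemma ReF_zero {z : ℂ} (hz : ‖z‖ = 1) (hz' : z ∉ Set.range w) :
    (Ff M w c z).re = 0 := by
  rw [Ff, Complex.re_sum]
  apply Finset.sum_eq_zero
  intro k _
  rw [Complex.re_ofReal_mul]
  rw [re_zero_of_conj_neg (conj_herglotz (hw k) hz (fun hh => hz' ⟨k, hh⟩)), mul_zero]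

include hw hinj hc in
lemma Qeval_ne {z : ℂ} (hz : ‖z‖ ≤ 1) : (Qp M w c).eval z ≠ 0 := by
  rw [Qp_eval]
  by_cases hr : z ∈ Set.range w
  · obtain ⟨k, hk⟩ := hr
    have hD : Df M w z = 0 := by
      rw [Df]
      exact Finset.prod_eq_zero (Finset.mem_univ k) (by rw [hk]; ring)
    rw [hD, add_zero, ← hk]
    exact Nf_pole hw hinj hc k
  · rw [Nf_eq hr]
    have h1 : Ff M w c z + 1 ≠ 0 := by
      intro h
      have := congrArg Complex.re h
      simp only [Complex.add_re, Complex.one_re, Complex.zero_re] at this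
      have := ReF_nonneg hw hc hz hr
      linarith
    have : Df M w z * Ff M w c z + Df M w z = Df M w z * (Ff M w c z + 1) := by ring
    rw [this]
    exact mul_ne_zero (Df_ne_zero hr) h1

end facts2

lemma refl_sub {z u : ℂ} (hz : ‖z‖ = 1) (hu : ‖u‖ = 1) :
    z * starRingEnd ℂ (z - u) * u = u - z := by
  have h1 : z * starRingEnd ℂ z = 1 := by
    rw [Complex.mul_conj, Complex.normSq_eq_norm_sq, hz]; norm_num
  have h2 : u * starRingEnd ℂ u = 1 := by
    rw [Complex.mul_conj, Complex.normSq_eq_norm_sq, hu]; norm_num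
  rw [map_sub]
  linear_combination u * h1 - z * h2

lemma refl_add {z u : ℂ} (hz : ‖z‖ = 1) (hu : ‖u‖ = 1) :
    z * starRingEnd ℂ (z + u) * u = u + z := by
  have h1 : z * starRingEnd ℂ z = 1 := by
    rw [Complex.mul_conj, Complex.normSq_eq_norm_sq, hz]; norm_num
  have h2 : u * starRingEnd ℂ u = 1 := by
    rw [Complex.mul_conj, Complex.normSq_eq_norm_sq, hu]; norm_num
  rw [map_add]
  linear_combination u * h1 + z * h2

section rev
variable {M : ℕ} {w : Fin M → ℂ} {c : Fin M → ℝ}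
variable (hw : ∀ k, ‖w k‖ = 1)

include hw in
lemma revD {z : ℂ} (hz : ‖z‖ = 1) :
    z ^ M * starRingEnd ℂ (Df M w z) * ∏ k, w k = (-1) ^ M * Df M w z := by
  have h1 : z ^ M * starRingEnd ℂ (Df M w z) * ∏ k, w k
      = ∏ k, (z * starRingEnd ℂ (z - w k) * w k) := by
    rw [Df, map_prod]
    rw [show z ^ M = ∏ _k : Fin M, z by simp]
    rw [← Finset.prod_mul_distrib, ← Finset.prod_mul_distrib]
  rw [h1, Finset.prod_congr rfl (fun k _ => refl_sub hz (hw k))]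
  calc (∏ k, (w k - z)) = ∏ k, ((-1) * (z - w k)) := by
        apply Finset.prod_congr rfl; intros; ring
    _ = (-1) ^ M * Df M w z := by
        rw [Finset.prod_mul_distrib, Df]; simp

include hw in
lemma revN {z : ℂ} (hz : ‖z‖ = 1) :
    z ^ M * starRingEnd ℂ (Nf M w c z) * ∏ k, w k = -((-1) ^ M * Nf M w c z) := by
  have hzW : ∀ k : Fin M, z ^ M * ∏ j, w j = (z * w k) * ∏ l ∈ Finset.univ.erase k, (z * w l) := by
    intro k
    have h1 : ∏ j, (z * w j) = z ^ M * ∏ j, w j := by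
      rw [Finset.prod_mul_distrib]; simp
    have h2 : ∏ j, (z * w j) = (z * w k) * ∏ l ∈ Finset.univ.erase k, (z * w l) :=
      (Finset.mul_prod_erase _ _ (Finset.mem_univ k)).symm
    rw [← h1, h2]
  have key : ∀ k : Fin M,
      z ^ M * starRingEnd ℂ ((c k : ℂ) * ((z + w k) * ∏ l ∈ Finset.univ.erase k, (z - w l)))
        * ∏ j, w j
      = -((-1) ^ M * ((c k : ℂ) * ((z + w k) * ∏ l ∈ Finset.univ.erase k, (z - w l)))) := by
    intro k
    have e1 : (∏ l ∈ Finset.univ.erase k, starRingEnd ℂ (z - w l)) *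
        (∏ l ∈ Finset.univ.erase k, (z * w l)) = ∏ l ∈ Finset.univ.erase k, (w l - z) := by
      rw [← Finset.prod_mul_distrib]
      apply Finset.prod_congr rfl
      intro l _
      linear_combination refl_sub hz (hw l)
    have e2 : z * w k * starRingEnd ℂ (z + w k) = w k + z := by
      linear_combination refl_add hz (hw k)
    have e3 : ∏ l ∈ Finset.univ.erase k, (w l - z)
        = (-1) ^ (M - 1) * ∏ l ∈ Finset.univ.erase k, (z - w l) := by
      calc (∏ l ∈ Finset.univ.erase k, (w l - z))
          = ∏ l ∈ Finset.univ.erase k, ((-1) * (z - w l)) := by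
            apply Finset.prod_congr rfl; intros; ring
        _ = (-1) ^ (M - 1) * ∏ l ∈ Finset.univ.erase k, (z - w l) := by
            rw [Finset.prod_mul_distrib, Finset.prod_const,
              Finset.card_erase_of_mem (Finset.mem_univ _), Finset.card_univ, Fintype.card_fin]
    have e4 : -((-1 : ℂ) ^ M) = (-1) ^ (M - 1) := by
      have hM : M = (M - 1) + 1 := (Nat.succ_pred_eq_of_pos k.pos).symm
      conv_lhs => rw [hM]
      rw [pow_succ]
      ring
    rw [map_mul, map_mul, map_prod, Complex.conj_ofReal]
    calc z ^ M * ((c k : ℂ) * (starRingEnd ℂ (z + w k) *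
            ∏ l ∈ Finset.univ.erase k, starRingEnd ℂ (z - w l))) * ∏ j, w j
        = (c k : ℂ) * ((z * w k * starRingEnd ℂ (z + w k)) *
            ((∏ l ∈ Finset.univ.erase k, starRingEnd ℂ (z - w l)) *
             (∏ l ∈ Finset.univ.erase k, (z * w l)))) := by
          rw [mul_comm (z^M) _, mul_assoc, hzW k]; ring
      _ = (c k : ℂ) * ((w k + z) * ∏ l ∈ Finset.univ.erase k, (w l - z)) := by rw [e1, e2]
      _ = (c k : ℂ) * ((w k + z) * ((-1) ^ (M - 1) * ∏ l ∈ Finset.univ.erase k, (z - w l))) := by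
          rw [e3]
      _ = -((-1) ^ M * ((c k : ℂ) * ((z + w k) * ∏ l ∈ Finset.univ.erase k, (z - w l)))) := by
          rw [← e4]; ring
  rw [Nf, map_neg, map_sum, mul_neg, neg_mul, Finset.mul_sum, Finset.sum_mul]
  rw [Finset.sum_congr rfl (fun k _ => key k)]
  simp only [Finset.sum_neg_distrib, Finset.mul_sum, mul_neg, neg_neg]

include hw in
lemma revQ {z : ℂ} (hz : ‖z‖ = 1) :
    z ^ M * starRingEnd ℂ ((Qp M w c).eval z) * ∏ k, w k
      = (-1) ^ M * (Df M w z - Nf M w c z) := by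
  rw [Qp_eval, map_add]
  have h1 := revD (M := M) (w := w) hw hz
  have h2 := revN (M := M) (w := w) (c := c) hw hz
  linear_combination h1 + h2

end rev

lemma core {M : ℕ} (w : Fin M → ℂ) (hw : ∀ k, ‖w k‖ = 1)
    (hinj : Function.Injective w) (c : Fin M → ℝ) (hc : ∀ k, 0 < c k)
    (hS : (∑ k, c k) ≠ 1) :
    ∃ G : ℂ → ℂ, IsFiniteBlaschke G ∧ (∀ k, G (w k) = 1) ∧
      ∀ z : ℂ, ‖z‖ = 1 → z ∉ Set.range w →
        G z = (Ff M w c z - 1) / (Ff M w c z + 1) := by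
  classical
  set Q : Polynomial ℂ := Qp M w c with hQdef
  have hQd : Q.natDegree = M := Qp_natDegree hS
  have hQne : Q ≠ 0 := Qp_ne_zero hS
  have hcard : Q.roots.card = Q.natDegree :=
    (Polynomial.splits_iff_card_roots).mp (IsAlgClosed.splits Q)
  set L : List ℂ := Q.roots.toList with hLdef
  have hLlen : L.length = M := by rw [hLdef, Multiset.length_toList, hcard, hQd]
  set q : Fin L.length → ℂ := fun i => L.get i with hqdef
  have hqroot : ∀ i, q i ∈ Q.roots := by
    intro i
    exact Multiset.mem_toList.mp (List.get_mem L i)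
  have habs : ∀ i, 1 < ‖q i‖ := by
    intro i
    by_contra h
    push_neg at h
    exact Qeval_ne hw hinj hc h (Polynomial.mem_roots'.mp (hqroot i)).2
  have hq0 : ∀ i, q i ≠ 0 := fun i => by
    intro h
    have := habs i
    rw [h] at this; simp at this; linarith
  have hcq0 : ∀ i, starRingEnd ℂ (q i) ≠ 0 := fun i => by
    simpa using hq0 i
  -- factorization
  set lc : ℂ := Q.leadingCoeff with hlcdef
  have hlc : lc = 1 - ∑ k, (c k : ℂ) := by
    rw [hlcdef, Polynomial.leadingCoeff, hQd, hQdef, Qp_coeff_M]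
  have hlc0 : lc ≠ 0 := by rw [hlc]; exact sum_c_ne hS
  have hlc_conj : starRingEnd ℂ lc = lc := by
    rw [hlc]
    rw [map_sub, map_one, map_sum]
    congr 1
    apply Finset.sum_congr rfl
    intro k _
    exact Complex.conj_ofReal _
  have hfact : ∀ z : ℂ, Q.eval z = lc * ∏ i, (z - q i) := by
    intro z
    conv_lhs => rw [← Polynomial.C_leadingCoeff_mul_prod_multiset_X_sub_C hcard]
    rw [Polynomial.eval_mul, Polynomial.eval_C, Polynomial.eval_multiset_prod]
    congr 1
    rw [Multiset.map_map]
    have : ∀ r : ℂ, (Polynomial.eval z ∘ fun a => Polynomial.X - Polynomial.C a) r = z - r := by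
      intro r; simp
    rw [Multiset.map_congr rfl (fun r _ => this r)]
    have hcoe : Q.roots = (L : Multiset ℂ) := by rw [hLdef, Multiset.coe_toList]
    rw [hcoe, Multiset.map_coe, Multiset.prod_coe]
    rw [← Fin.prod_univ_fun_getElem L (fun r => z - r)]
    apply Finset.prod_congr rfl
    intro i _
    rw [hqdef]
    simp [List.get_eq_getElem]
  -- data
  set a : Fin L.length → ℂ := fun i => (starRingEnd ℂ (q i))⁻¹ with hadef
  have ha : ∀ i, ‖a i‖ < 1 := by
    intro i
    rw [hadef]
    simp only [norm_inv, Complex.norm_conj]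
    exact inv_lt_one_of_one_lt₀ (habs i)
  have hconj_a : ∀ i, starRingEnd ℂ (a i) = (q i)⁻¹ := by
    intro i
    rw [hadef]
    simp
  set W : ℂ := ∏ k, w k with hWdef
  have hWabs : ‖W‖ = 1 := by
    rw [hWdef, norm_prod]
    exact Finset.prod_eq_one fun k _ => hw k
  set Cq : ℂ := ∏ i, starRingEnd ℂ (q i) with hCqdef
  set Pq' : ℂ := ∏ i, q i with hPq'def
  have hCq0 : Cq ≠ 0 := Finset.prod_ne_zero_iff.mpr fun i _ => hcq0 i
  have hPq'0 : Pq' ≠ 0 := Finset.prod_ne_zero_iff.mpr fun i _ => hq0 i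
  set ω : ℂ := -((-1) ^ M * W * Cq) * Pq'⁻¹ with hωdef
  have hω : ω * Pq' = -((-1) ^ M * W * Cq) := by
    rw [hωdef]
    field_simp
  have hωabs : ‖ω‖ = 1 := by
    have h1 : ‖Cq‖ = ‖Pq'‖ := by
      rw [hCqdef, hPq'def, norm_prod, norm_prod]
      apply Finset.prod_congr rfl
      intro i _
      exact Complex.norm_conj _
    have hP : ‖Pq'‖ ≠ 0 := norm_ne_zero_iff.mpr hPq'0
    rw [hωdef, norm_mul, norm_neg, norm_mul, norm_mul, norm_pow, norm_neg,
      norm_one, one_pow, norm_inv, hWabs, h1]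
    field_simp
  have key : ∀ z : ℂ, ‖z‖ = 1 →
      (ω * ∏ i, (z - a i) / (1 - starRingEnd ℂ (a i) * z)) * Q.eval z
        = Nf M w c z - Df M w z := by
    intro z hz
    have hzz : z * starRingEnd ℂ z = 1 := by
      rw [Complex.mul_conj, Complex.normSq_eq_norm_sq, hz]; norm_num
    set Pnum : ℂ := ∏ i, (z - a i) with hPnumdef
    set Pden : ℂ := ∏ i, (1 - starRingEnd ℂ (a i) * z) with hPdendef
    set Pqz : ℂ := ∏ i, (z - q i) with hPqzdef
    set cP : ℂ := starRingEnd ℂ Pqz with hcPdef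
    have hPden0 : Pden ≠ 0 :=
      Finset.prod_ne_zero_iff.mpr fun i _ => denom_ne _ _ (ha i) hz
    have e1 : Pnum * Cq = (-1) ^ M * z ^ M * cP := by
      rw [hPnumdef, hCqdef, ← Finset.prod_mul_distrib, hcPdef, hPqzdef, map_prod]
      have : ∀ i : Fin L.length, (z - a i) * starRingEnd ℂ (q i)
          = (-1) * z * starRingEnd ℂ (z - q i) := by
        intro i
        rw [hadef, map_sub]
        have hql : (starRingEnd ℂ (q i))⁻¹ * starRingEnd ℂ (q i) = 1 :=
          inv_mul_cancel₀ (hcq0 i)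
        linear_combination hzz - hql
      rw [Finset.prod_congr rfl fun i _ => this i]
      rw [Finset.prod_mul_distrib, Finset.prod_mul_distrib]
      simp [hLlen]
    have e2 : Pden * Pq' = (-1) ^ M * Pqz := by
      rw [hPdendef, hPq'def, ← Finset.prod_mul_distrib, hPqzdef]
      have : ∀ i : Fin L.length, (1 - starRingEnd ℂ (a i) * z) * q i
          = (-1) * (z - q i) := by
        intro i
        rw [hconj_a i]
        have hmi : q i * (q i)⁻¹ = 1 := mul_inv_cancel₀ (hq0 i)
        linear_combination (-z) * hmi
      rw [Finset.prod_congr rfl fun i _ => this i]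
      rw [Finset.prod_mul_distrib]
      simp [hLlen]
    have e3 : Q.eval z = lc * Pqz := hfact z
    have e6 : z ^ M * lc * cP * W = (-1) ^ M * (Df M w z - Nf M w c z) := by
      have e4 := revQ (M := M) (w := w) (c := c) hw hz
      have hcQ : starRingEnd ℂ (Q.eval z) = lc * cP := by
        rw [e3, map_mul, hlc_conj, hcPdef]
      rw [hcQ] at e4
      linear_combination e4
    have hsq : (-1 : ℂ) ^ M * (-1) ^ M = 1 := by
      rw [← mul_pow]; norm_num
    have H : ω * Pnum * Q.eval z * (Cq * Pq') = (Nf M w c z - Df M w z) * Pden * (Cq * Pq') := by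
      linear_combination (ω * Pnum * Cq * Pq') * e3 + (ω * lc * Pqz * Pq') * e1 +
        ((-1) ^ M * z ^ M * cP * lc * Pqz) * hω +
        (-(W * Cq * z ^ M * cP * lc * Pqz)) * hsq + (-(Cq * Pqz)) * e6 +
        (-((Nf M w c z - Df M w z) * Cq)) * e2
    have H2 : ω * Pnum * Q.eval z = (Nf M w c z - Df M w z) * Pden :=
      mul_right_cancel₀ (mul_ne_zero hCq0 hPq'0) H
    rw [Finset.prod_div_distrib]
    rw [div_eq_mul_inv]
    rw [← hPnumdef, ← hPdendef]
    linear_combination Pden⁻¹ * H2 + (Nf M w c z - Df M w z) * mul_inv_cancel₀ hPden0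
  refine ⟨fun z => ω * ∏ i, (z - a i) / (1 - starRingEnd ℂ (a i) * z), ⟨L.length, ω, a, hωabs, ha, fun z => rfl⟩, ?_, ?_⟩
  · -- values at poles
    intro k
    have hz := hw k
    have hkey := key (w k) hz
    have hDf0 : Df M w (w k) = 0 := by
      rw [Df]
      exact Finset.prod_eq_zero (Finset.mem_univ k) (by ring)
    rw [hQdef, Qp_eval, hDf0, add_zero, sub_zero] at hkey
    have hN := Nf_pole (w := w) (c := c) hw hinj hc k
    have h2 : ((ω * ∏ i, ((w k) - a i) / (1 - starRingEnd ℂ (a i) * (w k))) - 1)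
        * Nf M w c (w k) = 0 := by linear_combination hkey
    rcases mul_eq_zero.mp h2 with h | h
    · exact sub_eq_zero.mp h
    · exact absurd h hN
  · -- values off poles
    intro z hz hzr
    have hkey := key z hz
    rw [hQdef, Qp_eval, Nf_eq hzr] at hkey
    have hDf := Df_ne_zero (w := w) hzr
    have hF1 : Ff M w c z + 1 ≠ 0 := by
      intro h
      have := congrArg Complex.re h
      rw [Complex.add_re, Complex.one_re, ReF_zero hw hc hz hzr, Complex.zero_re] at this
      linarith
    rw [eq_div_iff hF1]
    have : (ω * ∏ i, (z - a i) / (1 - starRingEnd ℂ (a i) * z)) * (Ff M w c z + 1) * Df M w z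
        = (Ff M w c z - 1) * Df M w z := by
      linear_combination hkey
    exact mul_right_cancel₀ hDf this

lemma step {n : ℕ} (hn : 1 ≤ n) (μ : Fin n → ℂ) (hμ : ∀ j, ‖μ j‖ = 1)
    (hinj : Function.Injective μ) (μ0 : ℂ) (hμ0 : ‖μ0‖ = 1)
    (hr : μ0 ∉ Set.range μ) (w : ℂ) (hw : ‖w‖ = 1) :
    ∃ G : ℂ → ℂ, IsFiniteBlaschke G ∧ (∀ j, G (μ j) = 1) ∧ G μ0 = w := by
  classical
  by_cases hw1 : w = 1
  · exact ⟨fun _ => 1, ⟨0, 1, Fin.elim0, by simp, fun k => k.elim0, fun z => by simp⟩,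
      fun j => rfl, hw1 ▸ rfl⟩
  have hw0 := abs_one_ne_zero hw
  have hμ0ne := abs_one_ne_zero hμ0
  have hw1' : (1 : ℂ) - w ≠ 0 := sub_ne_zero.mpr (Ne.symm hw1)
  obtain ⟨T0, hT0def⟩ : ∃ x : ℂ, x = (1 + w) / (1 - w) := ⟨_, rfl⟩
  have hT0 : starRingEnd ℂ T0 = -T0 := by
    have hwinv : (1 : ℂ) - w⁻¹ ≠ 0 := by
      intro h
      apply hw1
      have : w⁻¹ = 1 := by linear_combination -h
      exact inv_eq_one.mp this
    have hwi : w * w⁻¹ = 1 := mul_inv_cancel₀ hw0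
    rw [hT0def, map_div₀, map_add, map_sub, map_one, conj_eq_inv hw]
    rw [← neg_div, div_eq_div_iff hwinv hw1']
    linear_combination (-2) * hwi
  obtain ⟨K, hKdef⟩ : ∃ x : ℂ, x = ∑ j, (μ j + μ0) / (μ j - μ0) := ⟨_, rfl⟩
  have hK : starRingEnd ℂ K = -K := by
    rw [hKdef, map_sum, ← Finset.sum_neg_distrib]
    apply Finset.sum_congr rfl
    intro j _
    exact conj_herglotz (hμ j) hμ0 (fun h => hr ⟨j, h⟩)
  obtain ⟨T, hTdef⟩ : ∃ x : ℂ, x = T0 - K := ⟨_, rfl⟩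
  have hT : starRingEnd ℂ T = -T := by rw [hTdef, map_sub, hT0, hK]; ring
  have hT1 : T ≠ 1 := by
    intro h
    rw [h] at hT
    simp at hT
    exact absurd hT (by norm_num)
  have hTm1 : T - 1 ≠ 0 := sub_ne_zero.mpr hT1
  obtain ⟨v, hvdef⟩ : ∃ x : ℂ, x = μ0 * (1 + T) / (T - 1) := ⟨_, rfl⟩
  have hveq : v * (T - 1) = μ0 * (1 + T) := by rw [hvdef]; field_simp
  have hv_abs : ‖v‖ = 1 := by
    have hnorm : ((Complex.normSq (1 + T) : ℝ) : ℂ) = ((Complex.normSq (T - 1) : ℝ) : ℂ) := by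
      rw [← Complex.mul_conj, ← Complex.mul_conj, map_add, map_one, hT, map_sub, map_one, hT]
      ring
    have hnorm' : Complex.normSq (1 + T) = Complex.normSq (T - 1) := by exact_mod_cast hnorm
    have habs : ‖1 + T‖ = ‖T - 1‖ := by
      rw [Complex.norm_def, Complex.norm_def, hnorm']
    rw [hvdef, norm_div, norm_mul, hμ0, one_mul, habs]
    exact div_self (norm_ne_zero_iff.mpr hTm1)
  have hvu : v ≠ μ0 := by
    intro h
    rw [h] at hveq
    have : (2 : ℂ) * μ0 = 0 := by linear_combination -hveq
    simp [hμ0ne] at this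
  have hvT : (v + μ0) / (v - μ0) = T := by
    have hden : v - μ0 ≠ 0 := sub_ne_zero.mpr hvu
    rw [div_eq_iff hden]
    have h2 : v * (T - 1) = μ0 * (1 + T) := hveq
    linear_combination -h2
  have hT0p1 : T0 + 1 = 2 / (1 - w) := by rw [hT0def]; field_simp; ring
  have hT0m1 : T0 - 1 = 2 * w / (1 - w) := by rw [hT0def, div_sub' hw1']; ring_nf
  have hT0p1ne : T0 + 1 ≠ 0 := by rw [hT0p1]; exact div_ne_zero two_ne_zero hw1'
  have hfinal : (T0 - 1) / (T0 + 1) = w := by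
    rw [hT0p1, hT0m1]
    field_simp
  by_cases hvr : v ∈ Set.range μ
  · obtain ⟨i0, hi0⟩ := hvr
    obtain ⟨c, hcdef⟩ : ∃ x : Fin n → ℝ, x = fun j => if j = i0 then 2 else 1 := ⟨_, rfl⟩
    have hc : ∀ j, 0 < c j := by
      intro j; rw [hcdef]; dsimp only; split <;> norm_num
    have hcsum : ∑ j, c j = n + 1 := by
      rw [hcdef]
      have : ∀ j : Fin n, (if j = i0 then (2:ℝ) else 1) = 1 + (if j = i0 then 1 else 0) := by
        intro j; split <;> norm_num
      rw [Finset.sum_congr rfl fun j _ => this j, Finset.sum_add_distrib]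
      simp
    have hS : ∑ j, c j ≠ 1 := by
      rw [hcsum]
      intro h
      have : (n : ℝ) = 0 := by linarith
      have : n = 0 := by exact_mod_cast this
      omega
    obtain ⟨G, hG, hpole, hval⟩ := core μ hμ hinj c hc hS
    refine ⟨G, hG, hpole, ?_⟩
    rw [hval μ0 hμ0 hr]
    have hFf : Ff n μ c μ0 = T0 := by
      rw [Ff]
      have : ∀ j : Fin n, ((c j : ℝ) : ℂ) * ((μ j + μ0) / (μ j - μ0))
          = (μ j + μ0) / (μ j - μ0) + (if j = i0 then (μ j + μ0) / (μ j - μ0) else 0) := by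
        intro j
        rw [hcdef]
        dsimp only
        split <;> push_cast <;> ring
      rw [Finset.sum_congr rfl fun j _ => this j, Finset.sum_add_distrib]
      rw [Finset.sum_ite_eq' Finset.univ i0]
      simp only [Finset.mem_univ, if_true]
      rw [← hKdef, hi0, hvT, hTdef]
      ring
    rw [hFf, hfinal]
  · obtain ⟨W, hWdef⟩ : ∃ x : Fin (n + 1) → ℂ, x = Fin.snoc μ v := ⟨_, rfl⟩
    have hWabs : ∀ k, ‖W k‖ = 1 := by
      intro k
      refine Fin.lastCases ?_ ?_ k
      · rw [hWdef, Fin.snoc_last]; exact hv_abs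
      · intro i; rw [hWdef, Fin.snoc_castSucc]; exact hμ i
    have hWinj : Function.Injective W := by
      intro x y
      refine Fin.lastCases ?_ ?_ x
      · refine Fin.lastCases ?_ ?_ y
        · intro _; rfl
        · intro j h
          simp only [hWdef, Fin.snoc_last, Fin.snoc_castSucc] at h
          exact absurd ⟨j, h.symm⟩ hvr
      · intro i
        refine Fin.lastCases ?_ ?_ y
        · intro h
          simp only [hWdef, Fin.snoc_last, Fin.snoc_castSucc] at h
          exact absurd ⟨i, h⟩ hvr
        · intro j h
          simp only [hWdef, Fin.snoc_castSucc] at h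
          rw [hinj h]
    have hS : ∑ _j : Fin (n + 1), (1 : ℝ) ≠ 1 := by
      simp only [Finset.sum_const, Finset.card_univ, Fintype.card_fin, nsmul_eq_mul, mul_one]
      intro h
      have h2 : (n : ℝ) = 0 := by push_cast at h; linarith
      have h3 : n = 0 := by exact_mod_cast h2
      omega
    obtain ⟨G, hG, hpole, hval⟩ := core W hWabs hWinj (fun _ => 1) (fun _ => one_pos) hS
    have hrange : μ0 ∉ Set.range W := by
      rintro ⟨k, hk⟩
      revert hk
      refine Fin.lastCases ?_ ?_ k
      · intro hk
        simp only [hWdef, Fin.snoc_last] at hk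
        exact hvu hk
      · intro j hk
        simp only [hWdef, Fin.snoc_castSucc] at hk
        exact hr ⟨j, hk⟩
    refine ⟨G, hG, ?_, ?_⟩
    · intro j
      have := hpole j.castSucc
      rwa [hWdef, Fin.snoc_castSucc] at this
    · rw [hval μ0 hμ0 hrange]
      have hFf : Ff (n + 1) W (fun _ => 1) μ0 = T0 := by
        rw [Ff]
        simp only [Complex.ofReal_one, one_mul]
        rw [Fin.sum_univ_castSucc]
        rw [hWdef]
        simp only [Fin.snoc_castSucc, Fin.snoc_last]
        rw [← hKdef, hvT, hTdef]
        ring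
      rw [hFf, hfinal]

/-- Cantor–Phelps interpolation: given points `z j` on the circle and distinct points
`μ j` on the circle, there is a finite Blaschke product `B` with `B (μ j) = z j`. -/
theorem cantor_phelps_interpolation (n : ℕ) (z μ : Fin n → ℂ)
    (hz : ∀ j, ‖z j‖ = 1) (hμ : ∀ j, ‖μ j‖ = 1)
    (hdist : Function.Injective μ) :
    ∃ B : ℂ → ℂ, IsFiniteBlaschke B ∧ ∀ j, B (μ j) = z j := by
  induction n with
  | zero =>
    exact ⟨fun _ => 1, ⟨0, 1, Fin.elim0, by simp, fun k => k.elim0, fun ζ => by simp⟩,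
      fun j => j.elim0⟩
  | succ n ih =>
    rcases Nat.eq_zero_or_pos n with hn0 | hn
    · subst hn0
      refine ⟨fun _ => z 0, ⟨0, z 0, Fin.elim0, hz 0, fun k => k.elim0, fun ζ => by simp⟩, ?_⟩
      intro j
      have hj : j = 0 := by omega
      rw [hj]
    · have hinj' : Function.Injective (fun j : Fin n => μ j.castSucc) := by
        intro a b h
        exact Fin.castSucc_injective n (hdist h)
      obtain ⟨B', hB', hBv⟩ := ih (fun j => z j.castSucc) (fun j => μ j.castSucc)
        (fun j => hz _) (fun j => hμ _) hinj'
      have hBabs : ‖B' (μ (Fin.last n))‖ = 1 := blaschke_abs hB' (hμ _)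
      have hB0 : B' (μ (Fin.last n)) ≠ 0 := by
        intro h; rw [h] at hBabs; simp at hBabs
      have hwv : ‖z (Fin.last n) / B' (μ (Fin.last n))‖ = 1 := by
        rw [norm_div, hz, hBabs]
        norm_num
      have hrange : μ (Fin.last n) ∉ Set.range (fun j : Fin n => μ j.castSucc) := by
        rintro ⟨j, hj⟩
        exact absurd (hdist hj) (Fin.castSucc_lt_last j).ne
      obtain ⟨G, hG, hG1, hGv⟩ := step hn (fun j : Fin n => μ j.castSucc) (fun j => hμ _) hinj'
        (μ (Fin.last n)) (hμ _) hrange (z (Fin.last n) / B' (μ (Fin.last n))) hwv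
      refine ⟨fun ζ => B' ζ * G ζ, blaschke_mul hB' hG, ?_⟩
      intro j
      refine Fin.lastCases ?_ ?_ j
      · show B' _ * G _ = _
        rw [hGv]
        field_simp
      · intro i
        show B' _ * G _ = _
        rw [hG1 i, mul_one]
        exact hBv i
end

section
/- Every point (x₁, x₂, x₃) of the distinguished boundary of the tetrablock that is not triangular (i.e., x₁x₂ ≠ x₃) is of the form T_{v,χ}(0,0,1) for some selection ξ₁, ξ₂ ∈ 𝕋, z₁, z₂ ∈ 𝔻; explicitly, taking z₁ = −x₁x̄₃, z₂ = 0, ξ₁ = x₃, ξ₂ = 1 gives T_{v,χ}(0,0,1) = (x₁, x̄₁x₃, x₃) = (x₁, x₂, x₃). -/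
open Complex

/-- Every non-triangular point of the distinguished boundary of the tetrablock is of the
form `T_{v,χ}(0,0,1)` for some `ξ₁, ξ₂ ∈ 𝕋`, `z₁, z₂ ∈ 𝔻`. -/
theorem bE_nontriangular_is_orbit_point (x₁ x₂ x₃ : ℂ)
    (h₁ : ‖x₁‖ ≤ 1) (h₂ : x₁ = starRingEnd ℂ x₂ * x₃)
    (h₃ : ‖x₃‖ = 1) (hnt : x₁ * x₂ ≠ x₃) :
    ∃ ξ₁ ξ₂ z₁ z₂ : ℂ, ‖ξ₁‖ = 1 ∧ ‖ξ₂‖ = 1 ∧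
      ‖z₁‖ < 1 ∧ ‖z₂‖ < 1 ∧
      (-ξ₁ * (z₁ + ξ₂ * starRingEnd ℂ z₂) /
          (1 + ξ₂ * starRingEnd ℂ z₁ * starRingEnd ℂ z₂),
        -(starRingEnd ℂ z₁ * ξ₂ + z₂) /
          (1 + ξ₂ * starRingEnd ℂ z₁ * starRingEnd ℂ z₂),
        ξ₁ * starRingEnd ℂ ξ₂ * (1 + z₁ * z₂ * starRingEnd ℂ ξ₂) /
          (1 + ξ₂ * starRingEnd ℂ z₁ * starRingEnd ℂ z₂)) = (x₁, x₂, x₃) := by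
  have h3 : x₃ * starRingEnd ℂ x₃ = 1 := by
    have := Complex.mul_conj x₃
    rw [this, Complex.normSq_eq_norm_sq, h₃]; norm_num
  -- x₂ = conj x₁ * x₃
  have hx2 : x₂ = starRingEnd ℂ x₁ * x₃ := by
    have hc := congrArg (starRingEnd ℂ) h₂
    simp only [map_mul, RingHom.id_apply, Complex.conj_conj] at hc
    calc x₂ = x₂ * (starRingEnd ℂ x₃ * x₃) := by rw [mul_comm (starRingEnd ℂ x₃)]; rw [h3]; ring
    _ = (x₂ * starRingEnd ℂ x₃) * x₃ := by ring
    _ = starRingEnd ℂ x₁ * x₃ := by rw [← hc]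
  have hlt : ‖x₁‖ < 1 := by
    rcases lt_or_eq_of_le h₁ with h | h
    · exact h
    · exfalso
      apply hnt
      rw [hx2]
      have : x₁ * starRingEnd ℂ x₁ = 1 := by
        have := Complex.mul_conj x₁
        rw [this, Complex.normSq_eq_norm_sq, h]; norm_num
      calc x₁ * (starRingEnd ℂ x₁ * x₃) = (x₁ * starRingEnd ℂ x₁) * x₃ := by ring
      _ = x₃ := by rw [this, one_mul]
  refine ⟨x₃, 1, -x₁ * starRingEnd ℂ x₃, 0, h₃, by simp, ?_, by simp, ?_⟩
  · simpa [h₃] using hlt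
  · simp only [map_zero, map_one, map_neg, map_mul, Complex.conj_conj, mul_zero, add_zero,
      mul_one, one_mul, zero_add, Prod.mk.injEq]
    refine ⟨?_, ?_, ?_⟩
    · rw [div_one]
      calc -x₃ * (-x₁ * starRingEnd ℂ x₃) = x₁ * (x₃ * starRingEnd ℂ x₃) := by ring
      _ = x₁ := by rw [h3, mul_one]
    · rw [div_one, hx2, neg_mul, neg_neg]
    · rw [div_one]
end
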